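/- For an ON–OFF discrete-time Markov source, the throughput r_avg is twice differentiable at snr = 0 and the wideband slope of the first user's confidential message equals S₀ = −2·(r_avg'(0))²·log_e 2 / r_avg''(0) = 2·(E[X])² / (η·(θ/log_e 2)·(E[X])² + (θ/log_e 2)·Var(X) + E[Y]), where X = δ·(z1 − z2)·1{z1 ≥ z2}, Y = δ²·(z1² − z2²)·1{z1 ≥ z2}, and η = (1 − p22)(p11 + p22)/((1 − p11)(2 − p11 − p22)). -/

import Mathlib

set_option maxHeartbeats 1000000
open MeasureTheory ProbabilityTheory Filter Set

noncomputable def auxV (δ s t : ℝ) : ℝ := δ * t / (1 + δ * s * t)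

noncomputable def auxF {Ω : Type*} (c δ : ℝ) (w1 w2 : Ω → ℝ) (s : ℝ) (ω : Ω) : ℝ :=
  Real.exp (c * (Real.log (1 + δ * s * w2 ω) - Real.log (1 + δ * s * w1 ω)))

noncomputable def auxF1 {Ω : Type*} (c δ : ℝ) (w1 w2 : Ω → ℝ) (s : ℝ) (ω : Ω) : ℝ :=
  auxF c δ w1 w2 s ω * (c * (auxV δ s (w2 ω) - auxV δ s (w1 ω)))

noncomputable def auxF2 {Ω : Type*} (c δ : ℝ) (w1 w2 : Ω → ℝ) (s : ℝ) (ω : Ω) : ℝ :=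
  auxF c δ w1 w2 s ω * ((c * (auxV δ s (w2 ω) - auxV δ s (w1 ω)))^2
    + c * ((auxV δ s (w1 ω))^2 - (auxV δ s (w2 ω))^2))

lemma aux_eps {δ Mb ε : ℝ} (hδ : 0 < δ) (hMb : 0 < Mb) (hε : ε = 1/(2*δ*Mb)) : δ*ε*Mb = 1/2 := by
  rw [hε]; field_simp

lemma aux_P_lb {δ Mb ε s t : ℝ} (hδ : 0 < δ) (hMb : 0 < Mb) (hε : ε = 1/(2*δ*Mb))
    (hs : -ε < s) (ht0 : 0 ≤ t) (htb : t ≤ Mb) : 1/2 ≤ 1 + δ*s*t := by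
  have hεδ := aux_eps hδ hMb hε
  have hεpos : 0 < ε := by rw [hε]; positivity
  nlinarith [mul_nonneg hδ.le (mul_nonneg (by linarith : (0:ℝ) ≤ s+ε) ht0),
    mul_nonneg hδ.le (mul_nonneg hεpos.le (by linarith : (0:ℝ) ≤ Mb - t))]

lemma aux_P_ub {δ Mb ε s t : ℝ} (hδ : 0 < δ) (hMb : 0 < Mb) (hε : ε = 1/(2*δ*Mb))
    (hs : s < ε) (ht0 : 0 ≤ t) (htb : t ≤ Mb) : 1 + δ*s*t ≤ 3/2 := by
  have hεδ := aux_eps hδ hMb hε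
  have hεpos : 0 < ε := by rw [hε]; positivity
  nlinarith [mul_nonneg hδ.le (mul_nonneg (by linarith : (0:ℝ) ≤ ε - s) ht0),
    mul_nonneg hδ.le (mul_nonneg hεpos.le (by linarith : (0:ℝ) ≤ Mb - t))]

lemma aux_hasDerivAt_lin (δ t s : ℝ) : HasDerivAt (fun x : ℝ => 1 + δ * x * t) (δ * t) s := by
  simpa using (((hasDerivAt_id s).const_mul δ).mul_const t).const_add 1

lemma aux_hasDerivAt_log {δ Mb ε t : ℝ} (hδ : 0 < δ) (hMb : 0 < Mb) (hε : ε = 1/(2*δ*Mb))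
    (ht0 : 0 ≤ t) (htb : t ≤ Mb) {s : ℝ} (hs : -ε < s) :
    HasDerivAt (fun x : ℝ => Real.log (1 + δ * x * t)) (auxV δ s t) s := by
  have h := (aux_hasDerivAt_lin δ t s).log
    (by have := aux_P_lb hδ hMb hε hs ht0 htb; positivity)
  exact h

lemma aux_hasDerivAt_V {δ Mb ε t : ℝ} (hδ : 0 < δ) (hMb : 0 < Mb) (hε : ε = 1/(2*δ*Mb))
    (ht0 : 0 ≤ t) (htb : t ≤ Mb) {s : ℝ} (hs : -ε < s) :
    HasDerivAt (fun x : ℝ => auxV δ x t) (-(auxV δ s t)^2) s := by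
  have hP : (0:ℝ) < 1 + δ * s * t := by
    have := aux_P_lb hδ hMb hε hs ht0 htb; linarith
  have h := (hasDerivAt_const s (δ*t)).div (aux_hasDerivAt_lin δ t s) hP.ne'
  refine h.congr_deriv ?_
  unfold auxV
  field_simp
  ring

lemma aux_hasDerivAt_F {Ω : Type*} {c δ Mb ε : ℝ} (hδ : 0 < δ) (hMb : 0 < Mb)
    (hε : ε = 1/(2*δ*Mb)) {w1 w2 : Ω → ℝ}
    (hw1 : ∀ ω, w1 ω ∈ Icc 0 Mb) (hw2 : ∀ ω, w2 ω ∈ Icc 0 Mb)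
    (ω : Ω) {s : ℝ} (hs : -ε < s) :
    HasDerivAt (fun x => auxF c δ w1 w2 x ω) (auxF1 c δ w1 w2 s ω) s := by
  have h2 := aux_hasDerivAt_log hδ hMb hε (hw2 ω).1 (hw2 ω).2 hs
  have h1 := aux_hasDerivAt_log hδ hMb hε (hw1 ω).1 (hw1 ω).2 hs
  exact ((h2.sub h1).const_mul c).exp

lemma aux_hasDerivAt_F1 {Ω : Type*} {c δ Mb ε : ℝ} (hδ : 0 < δ) (hMb : 0 < Mb)
    (hε : ε = 1/(2*δ*Mb)) {w1 w2 : Ω → ℝ}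
    (hw1 : ∀ ω, w1 ω ∈ Icc 0 Mb) (hw2 : ∀ ω, w2 ω ∈ Icc 0 Mb)
    (ω : Ω) {s : ℝ} (hs : -ε < s) :
    HasDerivAt (fun x => auxF1 c δ w1 w2 x ω) (auxF2 c δ w1 w2 s ω) s := by
  have hv2 := aux_hasDerivAt_V hδ hMb hε (hw2 ω).1 (hw2 ω).2 hs
  have hv1 := aux_hasDerivAt_V hδ hMb hε (hw1 ω).1 (hw1 ω).2 hs
  have hu := (hv2.sub hv1).const_mul c
  have := (aux_hasDerivAt_F (c := c) hδ hMb hε hw1 hw2 ω hs).mul hu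
  refine this.congr_deriv ?_
  unfold auxF2 auxF1
  simp only [Pi.sub_apply]
  ring

lemma aux_F_pos {Ω : Type*} (c δ : ℝ) (w1 w2 : Ω → ℝ) (s : ℝ) (ω : Ω) :
    0 < auxF c δ w1 w2 s ω := Real.exp_pos _

lemma aux_F_bound {Ω : Type*} {c δ Mb ε : ℝ} (hδ : 0 < δ) (hMb : 0 < Mb) (hc : 0 < c)
    (hε : ε = 1/(2*δ*Mb)) {w1 w2 : Ω → ℝ}
    (hw1 : ∀ ω, w1 ω ∈ Icc 0 Mb) (hw2 : ∀ ω, w2 ω ∈ Icc 0 Mb)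
    (ω : Ω) {s : ℝ} (hs : |s| < ε) :
    |auxF c δ w1 w2 s ω| ≤ Real.exp (2 * c * Real.log 2) := by
  rw [abs_of_pos (aux_F_pos c δ w1 w2 s ω)]
  rw [abs_lt] at hs
  unfold auxF
  apply Real.exp_le_exp.2
  have hlog : ∀ t, 0 ≤ t → t ≤ Mb → |Real.log (1 + δ * s * t)| ≤ Real.log 2 := by
    intro t ht0 htb
    have hlb := aux_P_lb hδ hMb hε hs.1 ht0 htb
    have hub := aux_P_ub hδ hMb hε hs.2 ht0 htb
    rw [abs_le]
    constructor
    · have : Real.log (1/2) ≤ Real.log (1 + δ*s*t) :=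
        Real.log_le_log (by norm_num) hlb
      rw [Real.log_div (by norm_num) (by norm_num), Real.log_one] at this
      linarith
    · have : Real.log (1 + δ*s*t) ≤ Real.log 2 :=
        Real.log_le_log (by linarith) (by linarith)
      exact this
  have h2 := hlog _ (hw2 ω).1 (hw2 ω).2
  have h1 := hlog _ (hw1 ω).1 (hw1 ω).2
  rw [abs_le] at h1 h2
  calc c * (Real.log (1 + δ * s * w2 ω) - Real.log (1 + δ * s * w1 ω))
      ≤ c * (2 * Real.log 2) := by
        apply mul_le_mul_of_nonneg_left _ hc.le
        linarith
    _ = 2 * c * Real.log 2 := by ring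

lemma aux_V_bound {δ Mb ε : ℝ} (hδ : 0 < δ) (hMb : 0 < Mb)
    (hε : ε = 1/(2*δ*Mb)) {t : ℝ} (ht0 : 0 ≤ t) (htb : t ≤ Mb)
    {s : ℝ} (hs : |s| < ε) : |auxV δ s t| ≤ 2 * δ * Mb := by
  rw [abs_lt] at hs
  have hlb := aux_P_lb hδ hMb hε hs.1 ht0 htb
  have hVnn : 0 ≤ auxV δ s t := div_nonneg (by positivity) (by linarith)
  rw [abs_of_nonneg hVnn]
  unfold auxV
  calc δ * t / (1 + δ * s * t) ≤ δ * Mb / (1/2) :=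
        div_le_div₀ (by positivity) (by nlinarith) (by norm_num) hlb
    _ = 2 * δ * Mb := by ring

lemma aux_F1_bound {Ω : Type*} {c δ Mb ε : ℝ} (hδ : 0 < δ) (hMb : 0 < Mb) (hc : 0 < c)
    (hε : ε = 1/(2*δ*Mb)) {w1 w2 : Ω → ℝ}
    (hw1 : ∀ ω, w1 ω ∈ Icc 0 Mb) (hw2 : ∀ ω, w2 ω ∈ Icc 0 Mb)
    (ω : Ω) {s : ℝ} (hs : |s| < ε) :
    |auxF1 c δ w1 w2 s ω| ≤ Real.exp (2 * c * Real.log 2) * (c * (4 * δ * Mb)) := by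
  unfold auxF1
  rw [abs_mul]
  apply mul_le_mul (aux_F_bound hδ hMb hc hε hw1 hw2 ω hs) _ (abs_nonneg _)
    (Real.exp_pos _).le
  have h2 := aux_V_bound hδ hMb hε (hw2 ω).1 (hw2 ω).2 hs
  have h1 := aux_V_bound hδ hMb hε (hw1 ω).1 (hw1 ω).2 hs
  rw [abs_mul, abs_of_pos hc]
  rw [abs_le] at h1 h2
  have : |auxV δ s (w2 ω) - auxV δ s (w1 ω)| ≤ 4 * δ * Mb := by
    rw [abs_le]; constructor <;> linarith
  exact mul_le_mul_of_nonneg_left this hc.le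

lemma aux_F2_bound {Ω : Type*} {c δ Mb ε : ℝ} (hδ : 0 < δ) (hMb : 0 < Mb) (hc : 0 < c)
    (hε : ε = 1/(2*δ*Mb)) {w1 w2 : Ω → ℝ}
    (hw1 : ∀ ω, w1 ω ∈ Icc 0 Mb) (hw2 : ∀ ω, w2 ω ∈ Icc 0 Mb)
    (ω : Ω) {s : ℝ} (hs : |s| < ε) :
    |auxF2 c δ w1 w2 s ω| ≤ Real.exp (2 * c * Real.log 2) *
      ((c * (4 * δ * Mb))^2 + c * (2 * (2 * δ * Mb)^2)) := by
  unfold auxF2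
  rw [abs_mul]
  apply mul_le_mul (aux_F_bound hδ hMb hc hε hw1 hw2 ω hs) _ (abs_nonneg _)
    (Real.exp_pos _).le
  have h2 := aux_V_bound hδ hMb hε (hw2 ω).1 (hw2 ω).2 hs
  have h1 := aux_V_bound hδ hMb hε (hw1 ω).1 (hw1 ω).2 hs
  set a := auxV δ s (w1 ω)
  set b := auxV δ s (w2 ω)
  rw [abs_le] at h1 h2
  have hM : 0 ≤ 2*δ*Mb := by positivity
  calc |(c * (b - a))^2 + c * (a^2 - b^2)|
      ≤ |(c * (b - a))^2| + |c * (a^2 - b^2)| := abs_add_le _ _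
    _ ≤ (c * (4 * δ * Mb))^2 + c * (2 * (2 * δ * Mb)^2) := by
        apply add_le_add
        · rw [abs_of_nonneg (sq_nonneg _)]
          have hba : (b - a)^2 ≤ (4*δ*Mb)^2 := by nlinarith
          calc (c * (b-a))^2 = c^2 * (b-a)^2 := by ring
            _ ≤ c^2 * (4*δ*Mb)^2 := by nlinarith [sq_nonneg c]
            _ = (c * (4*δ*Mb))^2 := by ring
        · rw [abs_mul, abs_of_pos hc]
          apply mul_le_mul_of_nonneg_left _ hc.le
          have ha2 : a^2 ≤ (2*δ*Mb)^2 := by nlinarith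
          have hb2 : b^2 ≤ (2*δ*Mb)^2 := by nlinarith
          rw [abs_le]; constructor <;> nlinarith [sq_nonneg a, sq_nonneg b]

lemma aux_integrable_of_bounded {Ω : Type*} [MeasurableSpace Ω] (μ : Measure Ω)
    [IsProbabilityMeasure μ] {f : Ω → ℝ} (hm : Measurable f) {C : ℝ}
    (hb : ∀ ω, |f ω| ≤ C) : Integrable f μ :=
  (integrable_const C).mono' hm.aestronglyMeasurable
    (ae_of_all _ fun ω => by simpa [Real.norm_eq_abs] using hb ω)

lemma aux_hasDerivAt_integral {Ω : Type*} [MeasurableSpace Ω] (μ : Measure Ω)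
    [IsProbabilityMeasure μ] (F F' : ℝ → Ω → ℝ)
    (hFm : ∀ s, Measurable (F s)) (hF'm : ∀ s, Measurable (F' s))
    {x₀ r C C' : ℝ} (hr : 0 < r)
    (hFb : ∀ ω, |F x₀ ω| ≤ C)
    (hF'b : ∀ s ∈ Metric.ball x₀ r, ∀ ω, |F' s ω| ≤ C')
    (hder : ∀ ω, ∀ s ∈ Metric.ball x₀ r, HasDerivAt (F · ω) (F' s ω) s) :
    HasDerivAt (fun s => ∫ ω, F s ω ∂μ) (∫ ω, F' x₀ ω ∂μ) x₀ := by
  have := hasDerivAt_integral_of_dominated_loc_of_deriv_le (μ := μ) (F := F) (F' := F')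
    (bound := fun _ => C') (x₀ := x₀) (Metric.ball_mem_nhds x₀ hr)
    (Eventually.of_forall fun s => (hFm s).aestronglyMeasurable)
    (aux_integrable_of_bounded μ (hFm x₀) hFb)
    ((hF'm x₀).aestronglyMeasurable)
    (ae_of_all _ fun ω s hs => by simpa [Real.norm_eq_abs] using hF'b s hs ω)
    (integrable_const C')
    (ae_of_all _ fun ω s hs => hder ω s hs)
  exact this.2

lemma aux_measurable_V {Ω : Type*} [MeasurableSpace Ω] {w : Ω → ℝ} (hw : Measurable w)
    (δ s : ℝ) : Measurable (fun ω => auxV δ s (w ω)) := by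
  unfold auxV
  fun_prop

lemma aux_measurable_F {Ω : Type*} [MeasurableSpace Ω] {w1 w2 : Ω → ℝ}
    (hw1 : Measurable w1) (hw2 : Measurable w2) (c δ s : ℝ) :
    Measurable (auxF c δ w1 w2 s) := by
  unfold auxF
  exact Real.measurable_exp.comp (measurable_const.mul
    ((Real.measurable_log.comp (by fun_prop)).sub (Real.measurable_log.comp (by fun_prop))))

lemma aux_measurable_F1 {Ω : Type*} [MeasurableSpace Ω] {w1 w2 : Ω → ℝ}
    (hw1 : Measurable w1) (hw2 : Measurable w2) (c δ s : ℝ) :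
    Measurable (auxF1 c δ w1 w2 s) := by
  exact (aux_measurable_F hw1 hw2 c δ s).mul (measurable_const.mul
    ((aux_measurable_V hw2 δ s).sub (aux_measurable_V hw1 δ s)))

lemma aux_measurable_F2 {Ω : Type*} [MeasurableSpace Ω] {w1 w2 : Ω → ℝ}
    (hw1 : Measurable w1) (hw2 : Measurable w2) (c δ s : ℝ) :
    Measurable (auxF2 c δ w1 w2 s) := by
  exact (aux_measurable_F hw1 hw2 c δ s).mul
    (((measurable_const.mul ((aux_measurable_V hw2 δ s).sub (aux_measurable_V hw1 δ s))).pow_const 2).add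
      (measurable_const.mul (((aux_measurable_V hw1 δ s).pow_const 2).sub ((aux_measurable_V hw2 δ s).pow_const 2))))

set_option maxHeartbeats 2000000 in
theorem wideband_slope_confidential_discrete_markov
    {Ω : Type*} [MeasurableSpace Ω] (μ : Measure Ω) [IsProbabilityMeasure μ]
    (z1 z2 : Ω → ℝ) (hz1m : Measurable z1) (hz2m : Measurable z2)
    (hz1nn : ∀ ω, 0 ≤ z1 ω) (hz2nn : ∀ ω, 0 ≤ z2 ω)
    (M : ℝ) (hz1b : ∀ ω, z1 ω ≤ M) (hz2b : ∀ ω, z2 ω ≤ M)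
    (hpos : 0 < (μ {ω | z2 ω < z1 ω}).toReal)
    (θ δ p11 p22 : ℝ) (hθ : 0 < θ) (hδ0 : 0 < δ) (hδ1 : δ ≤ 1)
    (hp11 : p11 ∈ Set.Ioo (0 : ℝ) 1) (hp22 : p22 ∈ Set.Ioo (0 : ℝ) 1)
    (Pon : ℝ) (hPon : Pon = (1 - p11) / (2 - p11 - p22))
    (η : ℝ) (hη : η = (1 - p22) * (p11 + p22) / ((1 - p11) * (2 - p11 - p22)))
    (R1 : ℝ → Ω → ℝ)
    (hR1 : ∀ snr ω, R1 snr ω =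
      if z2 ω ≤ z1 ω then
        Real.logb 2 ((1 + δ * snr * z1 ω) / (1 + δ * snr * z2 ω)) else 0)
    (g1 : ℝ → ℝ) (hg1 : ∀ snr, g1 snr = ∫ ω, Real.exp (-θ * R1 snr ω) ∂μ)
    (ravg : ℝ → ℝ)
    (hravg : ∀ snr, ravg snr = (Pon / θ) * Real.log
      ((1 - p11 * g1 snr) / ((1 - p11 - p22) * (g1 snr) ^ 2 + p22 * g1 snr)))
    (X Y : Ω → ℝ)
    (hX : ∀ ω, X ω = if z2 ω ≤ z1 ω then δ * (z1 ω - z2 ω) else 0)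
    (hY : ∀ ω, Y ω = if z2 ω ≤ z1 ω then δ ^ 2 * ((z1 ω) ^ 2 - (z2 ω) ^ 2) else 0)
    (VarX : ℝ) (hVarX : VarX = (∫ ω, (X ω) ^ 2 ∂μ) - (∫ ω, X ω ∂μ) ^ 2) :
    ∃ ravg' : ℝ → ℝ, ∃ d2 : ℝ,
      (∀ᶠ snr in nhdsWithin 0 (Set.Ici 0),
        HasDerivWithinAt ravg (ravg' snr) (Set.Ici 0) snr) ∧
      HasDerivWithinAt ravg' d2 (Set.Ici 0) 0 ∧
      -2 * (ravg' 0) ^ 2 * Real.log 2 / d2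
        = 2 * (∫ ω, X ω ∂μ) ^ 2 /
          (η * (θ / Real.log 2) * (∫ ω, X ω ∂μ) ^ 2
            + (θ / Real.log 2) * VarX + ∫ ω, Y ω ∂μ) := by
  obtain ⟨hp11a, hp11b⟩ := hp11
  obtain ⟨hp22a, hp22b⟩ := hp22
  have hL : (0:ℝ) < Real.log 2 := Real.log_pos (by norm_num)
  have hAne : (1:ℝ) - p11 ≠ 0 := by intro h; linarith
  have hBne : (2:ℝ) - p11 - p22 ≠ 0 := by intro h; linarith
  set c := θ / Real.log 2 with hcdef
  have hcpos : 0 < c := div_pos hθ hL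
  set Mb := max M 1 with hMbdef
  have hMbpos : (0:ℝ) < Mb := lt_of_lt_of_le one_pos (le_max_right _ _)
  set ε := 1/(2*δ*Mb) with hεdef
  have hεpos : 0 < ε := by rw [hεdef]; positivity
  set w1 : Ω → ℝ := fun ω => if z2 ω ≤ z1 ω then z1 ω else 0 with hw1def
  set w2 : Ω → ℝ := fun ω => if z2 ω ≤ z1 ω then z2 ω else 0 with hw2def
  have hw1m : Measurable w1 :=
    Measurable.ite (measurableSet_le hz2m hz1m) hz1m measurable_const
  have hw2m : Measurable w2 :=
    Measurable.ite (measurableSet_le hz2m hz1m) hz2m measurable_const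
  have hw1b : ∀ ω, w1 ω ∈ Icc (0:ℝ) Mb := by
    intro ω
    rw [hw1def]
    by_cases h : z2 ω ≤ z1 ω
    · simp only [if_pos h]
      exact ⟨hz1nn ω, le_trans (hz1b ω) (le_max_left _ _)⟩
    · simp only [if_neg h]
      exact ⟨le_refl 0, hMbpos.le⟩
  have hw2b : ∀ ω, w2 ω ∈ Icc (0:ℝ) Mb := by
    intro ω
    rw [hw2def]
    by_cases h : z2 ω ≤ z1 ω
    · simp only [if_pos h]
      exact ⟨hz2nn ω, le_trans (hz2b ω) (le_max_left _ _)⟩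
    · simp only [if_neg h]
      exact ⟨le_refl 0, hMbpos.le⟩
  have hXw : ∀ ω, X ω = δ * (w1 ω - w2 ω) := by
    intro ω
    rw [hX ω, hw1def, hw2def]
    by_cases h : z2 ω ≤ z1 ω <;> simp [h]
  have hYw : ∀ ω, Y ω = δ^2 * ((w1 ω)^2 - (w2 ω)^2) := by
    intro ω
    rw [hY ω, hw1def, hw2def]
    by_cases h : z2 ω ≤ z1 ω <;> simp [h]
  set G : ℝ → ℝ := fun s => ∫ ω, auxF c δ w1 w2 s ω ∂μ with hGdef
  set G1 : ℝ → ℝ := fun s => ∫ ω, auxF1 c δ w1 w2 s ω ∂μ with hG1def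
  set G2 : ℝ → ℝ := fun s => ∫ ω, auxF2 c δ w1 w2 s ω ∂μ with hG2def
  have hball : ∀ x₀ ∈ Metric.ball (0:ℝ) (ε/2), ∀ s ∈ Metric.ball x₀ (ε/2), |s| < ε := by
    intro x₀ hx₀ s hs
    rw [Metric.mem_ball, Real.dist_eq, sub_zero] at hx₀
    rw [Metric.mem_ball, Real.dist_eq] at hs
    calc |s| = |(s - x₀) + x₀| := by ring_nf
      _ ≤ |s - x₀| + |x₀| := abs_add_le _ _
      _ < ε := by linarith
  have hGd : ∀ x₀ ∈ Metric.ball (0:ℝ) (ε/2), HasDerivAt G (G1 x₀) x₀ := by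
    intro x₀ hx₀
    rw [hGdef, hG1def]
    exact aux_hasDerivAt_integral μ (auxF c δ w1 w2) (auxF1 c δ w1 w2)
      (fun s => aux_measurable_F hw1m hw2m c δ s)
      (fun s => aux_measurable_F1 hw1m hw2m c δ s)
      (half_pos hεpos)
      (fun ω => aux_F_bound hδ0 hMbpos hcpos hεdef hw1b hw2b ω
        (hball x₀ hx₀ x₀ (Metric.mem_ball_self (half_pos hεpos))))
      (fun s hs ω => aux_F1_bound hδ0 hMbpos hcpos hεdef hw1b hw2b ω (hball x₀ hx₀ s hs))
      (fun ω s hs => aux_hasDerivAt_F hδ0 hMbpos hεdef hw1b hw2b ω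
        (by have := hball x₀ hx₀ s hs; rw [abs_lt] at this; exact this.1))
  have hG1d : ∀ x₀ ∈ Metric.ball (0:ℝ) (ε/2), HasDerivAt G1 (G2 x₀) x₀ := by
    intro x₀ hx₀
    rw [hG1def, hG2def]
    exact aux_hasDerivAt_integral μ (auxF1 c δ w1 w2) (auxF2 c δ w1 w2)
      (fun s => aux_measurable_F1 hw1m hw2m c δ s)
      (fun s => aux_measurable_F2 hw1m hw2m c δ s)
      (half_pos hεpos)
      (fun ω => aux_F1_bound hδ0 hMbpos hcpos hεdef hw1b hw2b ω
        (hball x₀ hx₀ x₀ (Metric.mem_ball_self (half_pos hεpos))))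
      (fun s hs ω => aux_F2_bound hδ0 hMbpos hcpos hεdef hw1b hw2b ω (hball x₀ hx₀ s hs))
      (fun ω s hs => aux_hasDerivAt_F1 hδ0 hMbpos hεdef hw1b hw2b ω
        (by have := hball x₀ hx₀ s hs; rw [abs_lt] at this; exact this.1))
  have hG0 : G 0 = 1 := by
    rw [hGdef]
    have : ∀ ω, auxF c δ w1 w2 0 ω = 1 := by
      intro ω; simp [auxF]
    simp only [this]
    simp
  have hG1_0 : G1 0 = -(c * ∫ ω, X ω ∂μ) := by
    rw [hG1def]
    have hptw : ∀ ω, auxF1 c δ w1 w2 0 ω = (-c) * X ω := by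
      intro ω
      rw [hXw ω]
      simp [auxF1, auxF, auxV]
      ring
    simp only [hptw]
    rw [integral_const_mul]
    ring
  have hXm : Measurable X := by
    have : X = fun ω => if z2 ω ≤ z1 ω then δ * (z1 ω - z2 ω) else 0 := funext hX
    rw [this]
    exact Measurable.ite (measurableSet_le hz2m hz1m) (by fun_prop) measurable_const
  have hYm : Measurable Y := by
    have : Y = fun ω => if z2 ω ≤ z1 ω then δ^2 * ((z1 ω)^2 - (z2 ω)^2) else 0 := funext hY
    rw [this]
    exact Measurable.ite (measurableSet_le hz2m hz1m) (by fun_prop) measurable_const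
  have hXb : ∀ ω, |X ω| ≤ δ * Mb := by
    intro ω
    rw [hXw ω]
    have h1 := hw1b ω; have h2 := hw2b ω
    rw [abs_mul, abs_of_pos hδ0]
    apply mul_le_mul_of_nonneg_left _ hδ0.le
    rw [abs_le]
    constructor <;> [nlinarith [h1.1, h2.2]; nlinarith [h1.2, h2.1]]
  have hYb : ∀ ω, |Y ω| ≤ δ^2 * Mb^2 := by
    intro ω
    rw [hYw ω]
    have h1 := hw1b ω; have h2 := hw2b ω
    rw [abs_mul, abs_of_pos (by positivity : (0:ℝ) < δ^2)]
    apply mul_le_mul_of_nonneg_left _ (by positivity)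
    rw [abs_le]
    constructor <;> nlinarith [h1.1, h1.2, h2.1, h2.2]
  have hX2int : Integrable (fun ω => (X ω)^2) μ := by
    apply aux_integrable_of_bounded μ (hXm.pow_const 2) (C := (δ*Mb)^2)
    intro ω
    rw [abs_of_nonneg (sq_nonneg _)]
    have := hXb ω
    nlinarith [abs_nonneg (X ω), sq_abs (X ω)]
  have hYint : Integrable Y μ := aux_integrable_of_bounded μ hYm hYb
  have hG2_0 : G2 0 = c^2 * (∫ ω, (X ω)^2 ∂μ) + c * (∫ ω, Y ω ∂μ) := by
    rw [hG2def]
    have hptw : ∀ ω, auxF2 c δ w1 w2 0 ω = c^2 * (X ω)^2 + c * Y ω := by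
      intro ω
      rw [hXw ω, hYw ω]
      simp [auxF2, auxF, auxV]
      ring
    simp only [hptw]
    rw [integral_add ((hX2int.const_mul (c^2))) (hYint.const_mul c),
      integral_const_mul, integral_const_mul]
  set W : Set ℝ := {g | 0 < 1 - p11*g ∧ 0 < (1-p11-p22)*g^2 + p22*g} with hWdef
  have hWopen : IsOpen W := by
    have h1 : IsOpen {g : ℝ | 0 < 1 - p11*g} := isOpen_lt continuous_const (by fun_prop)
    have h2 : IsOpen {g : ℝ | 0 < (1-p11-p22)*g^2 + p22*g} :=
      isOpen_lt continuous_const (by fun_prop)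
    exact h1.inter h2
  have h1W : (1:ℝ) ∈ W := by
    rw [hWdef]
    simp only [Set.mem_setOf_eq]
    constructor
    · rw [mul_one]; linarith
    · have e : (1-p11-p22)*(1:ℝ)^2+p22*1 = 1 - p11 := by ring
      rw [e]; linarith
  set hfun : ℝ → ℝ := fun g => (Pon/θ) *
    (Real.log (1 - p11*g) - Real.log ((1-p11-p22)*g^2 + p22*g)) with hfundef
  set h' : ℝ → ℝ := fun g => (Pon/θ) *
    ((-p11)/(1 - p11*g) - (2*(1-p11-p22)*g + p22)/((1-p11-p22)*g^2 + p22*g)) with h'def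
  have hN'at : ∀ g : ℝ, HasDerivAt (fun g : ℝ => 1 - p11*g) (-p11) g := by
    intro g
    simpa using ((hasDerivAt_id g).const_mul p11).const_sub 1
  have hD'at : ∀ g : ℝ, HasDerivAt (fun g : ℝ => (1-p11-p22)*g^2 + p22*g)
      (2*(1-p11-p22)*g + p22) g := by
    intro g
    have := ((hasDerivAt_pow 2 g).const_mul (1-p11-p22)).add ((hasDerivAt_id g).const_mul p22)
    refine this.congr_deriv ?_
    norm_num
    ring
  have hhd : ∀ g ∈ W, HasDerivAt hfun (h' g) g := by
    intro g hg
    obtain ⟨hN, hD⟩ := hg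
    exact (((hN'at g).log hN.ne').sub ((hD'at g).log hD.ne')).const_mul (Pon/θ)
  have hd' : HasDerivAt h'
      ((Pon/θ) * (((2-p11-p22)^2 - 2*(1-p22))/(1-p11)^2)) 1 := by
    have hNe : (1 - p11*1 : ℝ) ≠ 0 := by intro h; apply hAne; linarith
    have hDe : ((1-p11-p22)*1^2 + p22*1 : ℝ) ≠ 0 := by intro h; apply hAne; linarith
    have hnum' : ∀ g : ℝ, HasDerivAt (fun g : ℝ => 2*(1-p11-p22)*g + p22)
        (2*(1-p11-p22)) g := by
      intro g
      simpa using ((hasDerivAt_id g).const_mul (2*(1-p11-p22))).add_const p22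
    have t1 := (hasDerivAt_const (1:ℝ) (-p11)).div (hN'at 1) hNe
    have t2 := (hnum' 1).div (hD'at 1) hDe
    have hcm := (t1.sub t2).const_mul (Pon/θ)
    rw [h'def]
    refine hcm.congr_deriv ?_
    field_simp [hNe, hDe, hAne, hθ.ne']
    ring
  have hval1 : h' 1 = -(1/θ) := by
    rw [h'def]
    simp only []
    have e1 : (1:ℝ) - p11 * 1 = 1 - p11 := by ring
    have e2 : ((1:ℝ)-p11-p22)*1^2 + p22*1 = 1-p11 := by ring
    rw [e1, e2, hPon]
    field_simp
    ring
  set V : Set ℝ := Metric.ball (0:ℝ) (ε/2) ∩ G ⁻¹' W with hVdef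
  have hGcont : ContinuousOn G (Metric.ball (0:ℝ) (ε/2)) :=
    fun x hx => (hGd x hx).continuousAt.continuousWithinAt
  have hVopen : IsOpen V := hGcont.isOpen_inter_preimage Metric.isOpen_ball hWopen
  have h0ball : (0:ℝ) ∈ Metric.ball (0:ℝ) (ε/2) := Metric.mem_ball_self (half_pos hεpos)
  have h0V : (0:ℝ) ∈ V := ⟨h0ball, by
    simp only [Set.mem_preimage]
    rw [hG0]
    exact h1W⟩
  have hg1G : ∀ s ∈ Metric.ball (0:ℝ) (ε/2), g1 s = G s := by
    intro s hs
    have hsε : |s| < ε := hball 0 h0ball s (by simpa using hs)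
    rw [abs_lt] at hsε
    rw [hg1 s, hGdef]
    refine integral_congr_ae (ae_of_all _ fun ω => ?_)
    show Real.exp (-θ * R1 s ω) = auxF c δ w1 w2 s ω
    rw [hR1 s ω]
    by_cases h : z2 ω ≤ z1 ω
    · rw [if_pos h]
      have hz1P : (0:ℝ) < 1 + δ*s*z1 ω := by
        have := aux_P_lb hδ0 hMbpos hεdef hsε.1 (hz1nn ω)
          (le_trans (hz1b ω) (le_max_left _ _))
        linarith
      have hz2P : (0:ℝ) < 1 + δ*s*z2 ω := by
        have := aux_P_lb hδ0 hMbpos hεdef hsε.1 (hz2nn ω)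
          (le_trans (hz2b ω) (le_max_left _ _))
        linarith
      unfold auxF
      rw [hw1def, hw2def]
      simp only [if_pos h]
      congr 1
      rw [Real.logb, Real.log_div hz1P.ne' hz2P.ne', hcdef]
      field_simp
      ring
    · rw [if_neg h]
      rw [hw1def, hw2def]
      simp [auxF, h]
  have hravgV : ∀ s ∈ V, ravg s = hfun (G s) := by
    intro s hs
    obtain ⟨hsb, hsW⟩ := hs
    have hWN : (0:ℝ) < 1 - p11 * G s := hsW.1
    have hWD : (0:ℝ) < (1-p11-p22) * (G s)^2 + p22 * G s := hsW.2
    rw [hravg s, hg1G s hsb, hfundef]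
    simp only []
    rw [Real.log_div hWN.ne' hWD.ne']
  have hmain : ∀ s ∈ V, HasDerivAt ravg (h' (G s) * G1 s) s := by
    intro s hs
    have hder := (hhd (G s) hs.2).comp s (hGd s hs.1)
    have hder2 : HasDerivAt (fun x => hfun (G x)) (h' (G s) * G1 s) s := by
      exact hder
    apply hder2.congr_of_eventuallyEq
    filter_upwards [hVopen.mem_nhds hs] with x hx
    exact hravgV x hx
  have hd'' : HasDerivAt h'
      ((Pon/θ) * (((2-p11-p22)^2 - 2*(1-p22))/(1-p11)^2)) (G 0) := by
    rw [hG0]; exact hd'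
  have hcomp : HasDerivAt (fun s => h' (G s))
      ((Pon/θ) * (((2-p11-p22)^2 - 2*(1-p22))/(1-p11)^2) * G1 0) 0 := by
    exact hd''.comp 0 (hGd 0 h0ball)
  have hrd := hcomp.mul (hG1d 0 h0ball)
  set EX := ∫ ω, X ω ∂μ with hEXdef
  set EX2 := ∫ ω, (X ω)^2 ∂μ with hEX2def
  set EY := ∫ ω, Y ω ∂μ with hEYdef
  set d2c : ℝ := (c * (((2-p11-p22)^2 - 2*(1-p22))/((1-p11)*(2-p11-p22))) * EX^2
    - c * EX2 - EY) / Real.log 2 with hd2cdef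
  have hrd' : HasDerivAt (fun s => h' (G s) * G1 s) d2c 0 := by
    refine hrd.congr_deriv ?_
    rw [hd2cdef, hG0, hG1_0, hG2_0, hval1, hPon, hcdef]
    field_simp
    ring
  have hr0' : h' (G 0) * G1 0 = EX / Real.log 2 := by
    rw [hG0, hG1_0, hval1, hcdef]
    field_simp
  refine ⟨fun s => h' (G s) * G1 s, d2c, ?_, hrd'.hasDerivWithinAt, ?_⟩
  · have hmem : V ∈ nhdsWithin (0:ℝ) (Set.Ici 0) :=
      nhdsWithin_le_nhds (hVopen.mem_nhds h0V)
    filter_upwards [hmem] with s hs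
    exact (hmain s hs).hasDerivWithinAt
  · simp only []
    rw [hr0']
    have hkey : η * c * EX^2 + c * VarX + EY = -(Real.log 2 * d2c) := by
      rw [hVarX, hη, hd2cdef, hcdef]
      field_simp
      ring
    rw [hkey]
    rcases eq_or_ne d2c 0 with hz | hz
    · rw [hz]; simp
    · field_simp
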